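/- arXiv:2402.01403 — 11 statements merged into one kernel-verified Lean document; each statement's English description precedes it below -/
import Mathlib

section
/- Let H be an r×n parity-check matrix over F_2 such that every column has Hamming weight exactly c, and let d be a positive integer. Suppose that for every nonempty set T of column indices with |T| ≤ d, the union of the supports of the columns indexed by T has more than c·|T|/2 elements. Then every nonzero vector x ∈ F_2^n with H·xᵀ = 0 has Hamming weight strictly greater than d. (A (c, d, c/2)-expander code has minimum distance greater than d.) -/
/-- The support of column `i` of a matrix over `F_2`: the set of row indices
carrying a `1` in that column. -/
def colSupport {r n : ℕ} (H : Matrix (Fin r) (Fin n) (ZMod 2)) (i : Fin n) :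
    Finset (Fin r) :=
  Finset.univ.filter (fun j => H j i = 1)

/-- A `(c, d, c/2)`-expander code has minimum distance greater than `d`. -/
theorem expander_min_distance {r n : ℕ} (H : Matrix (Fin r) (Fin n) (ZMod 2))
    (c d : ℕ) (hd : 0 < d)
    (hcol : ∀ i : Fin n, (colSupport H i).card = c)
    (hexp : ∀ T : Finset (Fin n), T.Nonempty → T.card ≤ d →
      c * T.card < 2 * (T.biUnion (colSupport H)).card)
    (x : Fin n → ZMod 2) (hx : x ≠ 0) (hker : H.mulVec x = 0) :
    d < (Finset.univ.filter (fun i => x i ≠ 0)).card := by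
  by_contra hle
  push_neg at hle
  set S := Finset.univ.filter (fun i => x i ≠ 0) with hS
  have hzo : ∀ a : ZMod 2, a = 0 ∨ a = 1 := by decide
  have hSne : S.Nonempty := by
    obtain ⟨i, hi⟩ := Function.ne_iff.mp hx
    exact ⟨i, Finset.mem_filter.mpr ⟨Finset.mem_univ i, by simpa using hi⟩⟩
  have hkey := hexp S hSne hle
  set U := S.biUnion (colSupport H) with hU
  have hxone : ∀ i ∈ S, x i = 1 := by
    intro i hi
    rw [hS, Finset.mem_filter] at hi
    rcases hzo (x i) with h | h
    · exact absurd h hi.2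
    · exact h
  -- degree of a row j within S
  set deg : Fin r → ℕ := fun j => (S.filter (fun i => H j i = 1)).card with hdeg
  -- each degree is even
  have heven : ∀ j : Fin r, 2 ∣ deg j := by
    intro j
    have h0 : H.mulVec x j = 0 := congrFun hker j
    have hsum : H.mulVec x j = (deg j : ZMod 2) := by
      have : ∀ i ∈ Finset.univ, i ∉ S.filter (fun i => H j i = 1) →
          H j i * x i = 0 := by
        intro i _ hi
        rw [Finset.mem_filter, hS, Finset.mem_filter] at hi
        push_neg at hi
        by_cases hxi : x i = 0
        · simp [hxi]
        · have := hi ⟨Finset.mem_univ i, hxi⟩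
          rcases hzo (H j i) with h | h
          · simp [h]
          · exact absurd h this
      rw [Matrix.mulVec, dotProduct,
        ← Finset.sum_subset (Finset.subset_univ _) this]
      have hones : ∑ i ∈ S.filter (fun i => H j i = 1), H j i * x i
          = ∑ _i ∈ S.filter (fun i => H j i = 1), (1 : ZMod 2) := by
        refine Finset.sum_congr rfl (fun i hi => ?_)
        rw [Finset.mem_filter] at hi
        rw [hi.2, hxone i hi.1, one_mul]
      rw [hones, Finset.sum_const, nsmul_eq_mul, mul_one, hdeg]
    rw [hsum] at h0
    exact (ZMod.natCast_eq_zero_iff _ 2).mp h0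
  -- rows in U have degree ≥ 2
  have hge2 : ∀ j ∈ U, 2 ≤ deg j := by
    intro j hj
    rw [hU, Finset.mem_biUnion] at hj
    obtain ⟨i, hiS, hji⟩ := hj
    have h1 : 0 < deg j := by
      rw [hdeg]
      refine Finset.card_pos.mpr ⟨i, Finset.mem_filter.mpr ⟨hiS, ?_⟩⟩
      simpa [colSupport] using hji
    obtain ⟨k, hk⟩ := heven j
    omega
  -- double counting
  have hcount : c * S.card = ∑ j : Fin r, deg j := by
    calc c * S.card = ∑ i ∈ S, (colSupport H i).card := by
          rw [Finset.sum_congr rfl (fun i _ => hcol i), Finset.sum_const,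
            smul_eq_mul, mul_comm]
      _ = ∑ i ∈ S, ∑ j : Fin r, if H j i = 1 then 1 else 0 := by
          refine Finset.sum_congr rfl (fun i _ => ?_)
          unfold colSupport
          rw [Finset.card_filter]
      _ = ∑ j : Fin r, ∑ i ∈ S, if H j i = 1 then 1 else 0 := Finset.sum_comm
      _ = ∑ j : Fin r, deg j := by
          refine Finset.sum_congr rfl (fun j _ => ?_)
          simp only [hdeg]
          exact (Finset.card_filter _ _).symm
  have hlower : 2 * U.card ≤ ∑ j : Fin r, deg j := by
    calc 2 * U.card = ∑ _j ∈ U, 2 := by rw [Finset.sum_const]; ring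
      _ ≤ ∑ j ∈ U, deg j := Finset.sum_le_sum hge2
      _ ≤ ∑ j : Fin r, deg j :=
          Finset.sum_le_sum_of_subset (Finset.subset_univ _)
  omega
end

section
/- Let B_1, …, B_t (t ≥ 1) be finite sets, each of size exactly c, such that 4·|B_1 ∪ ⋯ ∪ B_t| > 3·c·t. Let S be the syndrome of B_1, …, B_t. Then there exists an index i with 2·|B_i ∩ S| > c, i.e., some set B_i has more than half of its elements in S. -/
/-- The syndrome of a family of finite sets: the set of points lying in an odd
number of the sets (their iterated symmetric difference). -/
def syndrome {α ι : Type*} [DecidableEq α] [DecidableEq ι]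
    (T : Finset ι) (B : ι → Finset α) : Finset α :=
  (T.biUnion B).filter (fun p => Odd (T.filter (fun i => p ∈ B i)).card)

/-- If `t ≥ 1` finite sets, each of size `c`, satisfy `4·|union| > 3·c·t`, then
some set has more than half of its elements in the syndrome. -/
theorem exists_block_majority_in_syndrome {α : Type*} [DecidableEq α] {t c : ℕ}
    (ht : 1 ≤ t) (B : Fin t → Finset α) (hB : ∀ i, (B i).card = c)
    (hU : 3 * (c * t) < 4 * (Finset.univ.biUnion B).card) :
    ∃ i : Fin t, c < 2 * (B i ∩ syndrome Finset.univ B).card := by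
  classical
  set U : Finset α := Finset.univ.biUnion B with hUdef
  set S : Finset α := syndrome (Finset.univ : Finset (Fin t)) B with hSdef
  set m : α → ℕ := fun p => (Finset.univ.filter (fun i => p ∈ B i)).card with hm
  have hSU : S ⊆ U := Finset.filter_subset _ _
  -- double counting
  have key : ∀ (T : Finset α), (∑ i, (B i ∩ T).card) = ∑ p ∈ T, m p := by
    intro T
    calc (∑ i, (B i ∩ T).card)
        = ∑ i, ∑ p ∈ T, (if p ∈ B i then 1 else 0) := by
          refine Finset.sum_congr rfl fun i _ => ?_
          rw [← Finset.card_filter, Finset.filter_mem_eq_inter, Finset.inter_comm]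
      _ = ∑ p ∈ T, ∑ i : Fin t, (if p ∈ B i then 1 else 0) := Finset.sum_comm
      _ = ∑ p ∈ T, m p := by
          refine Finset.sum_congr rfl fun p _ => ?_
          simp only [hm, Finset.card_filter]
  have hBU : ∀ i, B i ∩ U = B i := fun i =>
    Finset.inter_eq_left.mpr (Finset.subset_biUnion_of_mem B (Finset.mem_univ i))
  have htotal : (∑ p ∈ U, m p) = c * t := by
    rw [← key U]
    simp only [hBU, hB]
    simp [Finset.sum_const, mul_comm]
  -- p ∈ U has m p ≥ 1
  have hone : ∀ p ∈ U, 1 ≤ m p := by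
    intro p hp
    obtain ⟨i, _, hi⟩ := Finset.mem_biUnion.mp hp
    exact Finset.card_pos.mpr ⟨i, Finset.mem_filter.mpr ⟨Finset.mem_univ i, hi⟩⟩
  -- p ∈ U \ S has m p ≥ 2
  have htwo : ∀ p ∈ U \ S, 2 ≤ m p := by
    intro p hp
    rw [Finset.mem_sdiff] at hp
    obtain ⟨hpU, hpS⟩ := hp
    have h1 := hone p hpU
    have hnotodd : ¬ Odd (m p) := by
      intro hodd
      exact hpS (Finset.mem_filter.mpr ⟨hpU, hodd⟩)
    obtain ⟨k, hk⟩ := Nat.not_odd_iff_even.mp hnotodd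
    omega
  have hSle : S.card ≤ ∑ p ∈ S, m p := by
    calc S.card = ∑ _p ∈ S, 1 := by simp
      _ ≤ ∑ p ∈ S, m p := Finset.sum_le_sum fun p hp => hone p (hSU hp)
  have hDle : 2 * (U \ S).card ≤ ∑ p ∈ U \ S, m p := by
    calc 2 * (U \ S).card = ∑ _p ∈ U \ S, 2 := by simp [mul_comm]
      _ ≤ ∑ p ∈ U \ S, m p := Finset.sum_le_sum htwo
  have hsplit : (∑ p ∈ U \ S, m p) + ∑ p ∈ S, m p = ∑ p ∈ U, m p :=
    Finset.sum_sdiff hSU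
  have hcard : (U \ S).card + S.card = U.card := Finset.card_sdiff_add_card_eq_card hSU
  have hA : c * t < 2 * ∑ p ∈ S, m p := by omega
  have hsum : (∑ i : Fin t, c) < ∑ i : Fin t, 2 * (B i ∩ S).card := by
    have : (∑ i : Fin t, 2 * (B i ∩ S).card) = 2 * ∑ p ∈ S, m p := by
      rw [← Finset.mul_sum, key S]
    rw [this]
    simpa [mul_comm] using hA
  obtain ⟨i, _, hi⟩ := Finset.exists_lt_of_sum_lt hsum
  exact ⟨i, hi⟩
end

section
/- Let B_1, …, B_t (t ≥ 1) be finite sets, each of size exactly c, such that 4·|B_1 ∪ ⋯ ∪ B_t| > 3·c·t. Let S be the syndrome of B_1, …, B_t. Then 2·|S| > c·t, i.e., the number of points covered an odd number of times exceeds c·t/2. -/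
/-- If `t ≥ 1` finite sets, each of size `c`, satisfy `4·|union| > 3·c·t`, then
the syndrome has more than `c·t/2` elements. -/
theorem syndrome_card_gt {α : Type*} [DecidableEq α] {t c : ℕ}
    (ht : 1 ≤ t) (B : Fin t → Finset α) (hB : ∀ i, (B i).card = c)
    (hU : 3 * (c * t) < 4 * (Finset.univ.biUnion B).card) :
    c * t < 2 * (syndrome Finset.univ B).card := by
  classical
  set U := Finset.univ.biUnion B with hUdef
  set n : α → ℕ := fun p => (Finset.univ.filter (fun i => p ∈ B i)).card with hn
  have key : ∑ p ∈ U, n p = c * t := by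
    have h1 : ∑ p ∈ U, n p = ∑ i : Fin t, (U.filter (fun p => p ∈ B i)).card := by
      simp only [hn, Finset.card_filter]
      rw [Finset.sum_comm]
    have h2 : ∀ i : Fin t, U.filter (fun p => p ∈ B i) = B i := by
      intro i
      ext p
      simp only [Finset.mem_filter, hUdef, Finset.mem_biUnion, Finset.mem_univ, true_and]
      exact ⟨fun h => h.2, fun h => ⟨⟨i, h⟩, h⟩⟩
    rw [h1]
    simp [h2, hB, mul_comm]
  have hsyn : syndrome Finset.univ B = U.filter (fun p => Odd (n p)) := rfl
  have hmain : 2 * U.card ≤ c * t + (syndrome Finset.univ B).card := by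
    rw [hsyn, ← key, Finset.card_filter, ← Finset.sum_add_distrib]
    rw [Finset.card_eq_sum_ones U, Finset.mul_sum]
    apply Finset.sum_le_sum
    intro p hp
    have hp1 : 1 ≤ n p := by
      rw [hUdef] at hp
      simp only [Finset.mem_biUnion, Finset.mem_univ, true_and] at hp
      obtain ⟨i, hi⟩ := hp
      exact Finset.card_pos.mpr ⟨i, by simp [hn, hi]⟩
    by_cases h : Odd (n p)
    · simp [h]; omega
    · simp only [h, if_false]
      rw [Nat.not_odd_iff_even] at h
      obtain ⟨k, hk⟩ := h
      omega
  omega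
end

section
/- Let B_1, …, B_n be finite sets, each of size exactly c, such that |B_i ∩ B_j| ≤ 1 for all distinct indices i ≠ j (a partial geometry with block size c). Let T be a nonempty set of indices of size t with 2·t ≤ c, and let S be the syndrome of the sets B_i with i ∈ T. Then for every i ∈ T one has |B_i ∩ S| ≥ c − t + 1, for every j ∉ T one has |B_j ∩ S| ≤ t, and consequently |B_i ∩ S| > |B_j ∩ S| for all i ∈ T and j ∉ T. -/
/-- In a partial geometry with block size `c`, for a syndrome of `t ≤ c/2`
erroneous blocks, every erroneous block meets the syndrome in at least
`c − t + 1` points, every other block in at most `t` points, and hence the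
erroneous blocks have strictly larger intersection with the syndrome. -/
theorem partial_geometry_syndrome_separation {α : Type*} [DecidableEq α]
    {n c t : ℕ} (B : Fin n → Finset α) (hB : ∀ i, (B i).card = c)
    (hgeo : ∀ i j : Fin n, i ≠ j → (B i ∩ B j).card ≤ 1)
    (T : Finset (Fin n)) (hTne : T.Nonempty) (hTcard : T.card = t)
    (ht : 2 * t ≤ c) :
    (∀ i ∈ T, c - t + 1 ≤ (B i ∩ syndrome T B).card) ∧
    (∀ j ∉ T, (B j ∩ syndrome T B).card ≤ t) ∧
    (∀ i ∈ T, ∀ j ∉ T, (B j ∩ syndrome T B).card < (B i ∩ syndrome T B).card) := by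
  have ht1 : 1 ≤ t := by
    have := Finset.card_pos.mpr hTne; omega
  have hlow : ∀ i ∈ T, c - t + 1 ≤ (B i ∩ syndrome T B).card := by
    intro i hi
    set J := (T.erase i).biUnion B with hJ
    have hsub : B i \ J ⊆ B i ∩ syndrome T B := by
      intro p hp
      rw [Finset.mem_sdiff] at hp
      obtain ⟨hpB, hpJ⟩ := hp
      have hnot : ∀ k ∈ T, k ≠ i → p ∉ B k := by
        intro k hk hki hpk
        exact hpJ (Finset.mem_biUnion.mpr ⟨k, Finset.mem_erase.mpr ⟨hki, hk⟩, hpk⟩)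
      refine Finset.mem_inter.mpr ⟨hpB, ?_⟩
      refine Finset.mem_filter.mpr ⟨Finset.mem_biUnion.mpr ⟨i, hi, hpB⟩, ?_⟩
      have : T.filter (fun k => p ∈ B k) = {i} := by
        ext k
        simp only [Finset.mem_filter, Finset.mem_singleton]
        constructor
        · rintro ⟨hk, hpk⟩
          by_contra hki
          exact hnot k hk hki hpk
        · rintro rfl; exact ⟨hi, hpB⟩
      rw [this]; simp
    have hJcard : (B i ∩ J).card ≤ t - 1 := by
      have h1 : B i ∩ J = (T.erase i).biUnion (fun k => B i ∩ B k) := by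
        ext p
        simp [hJ, Finset.mem_biUnion, and_assoc]
        tauto
      calc (B i ∩ J).card ≤ ∑ k ∈ T.erase i, (B i ∩ B k).card := by
            rw [h1]; exact Finset.card_biUnion_le
        _ ≤ ∑ k ∈ T.erase i, 1 := by
            refine Finset.sum_le_sum ?_
            intro k hk
            exact hgeo i k (Ne.symm (Finset.mem_erase.mp hk).1)
        _ = t - 1 := by
            rw [Finset.sum_const, smul_eq_mul, mul_one, Finset.card_erase_of_mem hi, hTcard]
    have hdiff : (B i \ J).card = c - (B i ∩ J).card := by
      rw [← Finset.sdiff_inter_self_left, Finset.card_sdiff_of_subset (Finset.inter_subset_left), hB]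
    have := Finset.card_le_card hsub
    omega
  have hhigh : ∀ j ∉ T, (B j ∩ syndrome T B).card ≤ t := by
    intro j hj
    have hsub : B j ∩ syndrome T B ⊆ T.biUnion (fun i => B j ∩ B i) := by
      intro p hp
      rw [Finset.mem_inter] at hp
      obtain ⟨hpB, hpS⟩ := hp
      have := (Finset.mem_filter.mp hpS).1
      obtain ⟨i, hi, hpi⟩ := Finset.mem_biUnion.mp this
      exact Finset.mem_biUnion.mpr ⟨i, hi, Finset.mem_inter.mpr ⟨hpB, hpi⟩⟩
    calc (B j ∩ syndrome T B).card ≤ (T.biUnion (fun i => B j ∩ B i)).card :=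
          Finset.card_le_card hsub
      _ ≤ ∑ i ∈ T, (B j ∩ B i).card := Finset.card_biUnion_le
      _ ≤ ∑ i ∈ T, 1 := by
          refine Finset.sum_le_sum ?_
          intro i hi
          exact hgeo j i (fun h => hj (h ▸ hi))
      _ = t := by rw [Finset.sum_const, smul_eq_mul, mul_one, hTcard]
  refine ⟨hlow, hhigh, ?_⟩
  intro i hi j hj
  have h1 := hlow i hi
  have h2 := hhigh j hj
  omega
end

section
/- Let B_1, …, B_n be finite sets, each of size exactly c, such that |B_i ∩ B_j| ≤ s for all distinct indices i ≠ j. Let T be a nonempty set of indices of size t with (2t − 1)·s < c, and let S be the syndrome of the sets B_i with i ∈ T. Then for every i ∈ T one has |B_i ∩ S| ≥ c − (t − 1)·s, for every j ∉ T one has |B_j ∩ S| ≤ t·s, and consequently |B_i ∩ S| > |B_j ∩ S| for all i ∈ T and j ∉ T. -/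
/-- For blocks of size `c` with pairwise intersections of size at most `s` and a
syndrome of `t` erroneous blocks where `(2t − 1)·s < c`, every erroneous block
meets the syndrome in at least `c − (t − 1)·s` points, every other block in at
most `t·s` points, and hence the erroneous blocks have strictly larger
intersection with the syndrome. -/
theorem partial_design_syndrome_separation {α : Type*} [DecidableEq α]
    {n c s t : ℕ} (B : Fin n → Finset α) (hB : ∀ i, (B i).card = c)
    (hgeo : ∀ i j : Fin n, i ≠ j → (B i ∩ B j).card ≤ s)
    (T : Finset (Fin n)) (hTne : T.Nonempty) (hTcard : T.card = t)
    (ht : (2 * t - 1) * s < c) :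
    (∀ i ∈ T, c - (t - 1) * s ≤ (B i ∩ syndrome T B).card) ∧
    (∀ j ∉ T, (B j ∩ syndrome T B).card ≤ t * s) ∧
    (∀ i ∈ T, ∀ j ∉ T, (B j ∩ syndrome T B).card < (B i ∩ syndrome T B).card) := by
  have ht1 : 1 ≤ t := hTcard ▸ Finset.card_pos.mpr hTne
  have key1 : ∀ i ∈ T, c - (t - 1) * s ≤ (B i ∩ syndrome T B).card := by
    intro i hi
    have hsub : B i \ syndrome T B ⊆ (T.erase i).biUnion (fun j => B i ∩ B j) := by
      intro p hp
      rw [Finset.mem_sdiff] at hp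
      obtain ⟨hpB, hpS⟩ := hp
      have hmem : p ∈ T.biUnion B := Finset.mem_biUnion.mpr ⟨i, hi, hpB⟩
      have hnotodd : ¬ Odd (T.filter (fun j => p ∈ B j)).card := fun h =>
        hpS (Finset.mem_filter.mpr ⟨hmem, h⟩)
      have hicard : i ∈ T.filter (fun j => p ∈ B j) := Finset.mem_filter.mpr ⟨hi, hpB⟩
      have h2 : 1 < (T.filter (fun j => p ∈ B j)).card := by
        rcases Nat.even_or_odd (T.filter (fun j => p ∈ B j)).card with he | ho
        · have h1 : 0 < (T.filter (fun j => p ∈ B j)).card :=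
            Finset.card_pos.mpr ⟨i, hicard⟩
          obtain ⟨k, hk⟩ := he
          omega
        · exact absurd ho hnotodd
      obtain ⟨j, hj, hji⟩ := Finset.exists_mem_ne h2 i
      rw [Finset.mem_filter] at hj
      exact Finset.mem_biUnion.mpr ⟨j, Finset.mem_erase.mpr ⟨hji, hj.1⟩,
        Finset.mem_inter.mpr ⟨hpB, hj.2⟩⟩
    have hcard : (B i \ syndrome T B).card ≤ (t - 1) * s := by
      calc (B i \ syndrome T B).card
          ≤ ((T.erase i).biUnion (fun j => B i ∩ B j)).card := Finset.card_le_card hsub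
        _ ≤ ∑ j ∈ T.erase i, (B i ∩ B j).card := Finset.card_biUnion_le
        _ ≤ ∑ _j ∈ T.erase i, s := Finset.sum_le_sum (fun j hj =>
            hgeo i j (Ne.symm (Finset.ne_of_mem_erase hj)))
        _ = (t - 1) * s := by
            rw [Finset.sum_const, Finset.card_erase_of_mem hi, hTcard, smul_eq_mul]
    have hsplit := Finset.card_inter_add_card_sdiff (B i) (syndrome T B)
    have := hB i
    omega
  have key2 : ∀ j ∉ T, (B j ∩ syndrome T B).card ≤ t * s := by
    intro j hj
    have hsub : B j ∩ syndrome T B ⊆ T.biUnion (fun i => B j ∩ B i) := by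
      intro p hp
      rw [Finset.mem_inter] at hp
      obtain ⟨hpB, hpS⟩ := hp
      have := (Finset.mem_filter.mp hpS).2
      have hpos : 0 < (T.filter (fun i => p ∈ B i)).card := this.pos
      obtain ⟨i, hi⟩ := Finset.card_pos.mp hpos
      rw [Finset.mem_filter] at hi
      exact Finset.mem_biUnion.mpr ⟨i, hi.1, Finset.mem_inter.mpr ⟨hpB, hi.2⟩⟩
    calc (B j ∩ syndrome T B).card
        ≤ (T.biUnion (fun i => B j ∩ B i)).card := Finset.card_le_card hsub
      _ ≤ ∑ i ∈ T, (B j ∩ B i).card := Finset.card_biUnion_le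
      _ ≤ ∑ _i ∈ T, s := Finset.sum_le_sum (fun i hi =>
          hgeo j i (fun h => hj (h ▸ hi)))
      _ = t * s := by rw [Finset.sum_const, hTcard, smul_eq_mul]
  refine ⟨key1, key2, fun i hi j hj => ?_⟩
  have h1 := key1 i hi
  have h2 := key2 j hj
  have heq : (2 * t - 1) * s = t * s + (t - 1) * s := by
    have : 2 * t - 1 = t + (t - 1) := by omega
    rw [this, add_mul]
  omega
end

section
/- Let H be an r×n parity-check matrix over F_2 such that every column has Hamming weight exactly c ≥ 1 and the supports of any two distinct columns intersect in at most one row index (the columns form a partial geometry with block size c). Then every nonzero vector x ∈ F_2^n with H·xᵀ = 0 has Hamming weight strictly greater than c. -/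
lemma zmod2_ne_zero {a : ZMod 2} (h : a ≠ 0) : a = 1 := by
  revert h; revert a; decide

lemma zmod2_ne_one {a : ZMod 2} (h : a ≠ 1) : a = 0 := by
  revert h; revert a; decide

/-- If the columns of a parity-check matrix form a partial geometry with block
size `c ≥ 1`, then every nonzero codeword has Hamming weight greater than `c`. -/
theorem partial_geometry_min_distance {r n : ℕ}
    (H : Matrix (Fin r) (Fin n) (ZMod 2)) (c : ℕ) (hc : 1 ≤ c)
    (hcol : ∀ i : Fin n, (colSupport H i).card = c)
    (hgeo : ∀ i j : Fin n, i ≠ j → (colSupport H i ∩ colSupport H j).card ≤ 1)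
    (x : Fin n → ZMod 2) (hx : x ≠ 0) (hker : H.mulVec x = 0) :
    c < (Finset.univ.filter (fun i => x i ≠ 0)).card := by
  set S : Finset (Fin n) := Finset.univ.filter (fun i => x i ≠ 0) with hS
  obtain ⟨i₀, hi₀⟩ : ∃ i, x i ≠ 0 := by
    by_contra h
    push_neg at h
    exact hx (funext h)
  have hi₀S : i₀ ∈ S := by simp [hS, hi₀]
  -- key claim: each row in the support of column i₀ hits another support column
  have key : ∀ j ∈ colSupport H i₀, ∃ i, i ≠ i₀ ∧ x i ≠ 0 ∧ H j i = 1 := by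
    intro j hj
    simp only [colSupport, Finset.mem_filter] at hj
    by_contra h
    push_neg at h
    have hrow : ∑ i, H j i * x i = 0 := congrFun hker j
    have : ∑ i, H j i * x i = H j i₀ * x i₀ := by
      apply Finset.sum_eq_single
      · intro i _ hne
        by_cases hx0 : x i = 0
        · simp [hx0]
        · have := h i hne hx0
          simp [zmod2_ne_one this]
      · intro hi; exact absurd (Finset.mem_univ i₀) hi
    rw [this, hj.2, zmod2_ne_zero hi₀, one_mul] at hrow
    exact one_ne_zero hrow
  choose f hfne hfS hfH using key
  have hmaps : ∀ (j : Fin r) (hj : j ∈ colSupport H i₀), f j hj ∈ S.erase i₀ := by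
    intro j hj
    exact Finset.mem_erase.2 ⟨hfne j hj, by simp [hS, hfS j hj]⟩
  -- injectivity via the partial geometry condition
  have hcard : (colSupport H i₀).card ≤ (S.erase i₀).card := by
    classical
    have : ∀ (j₁ : Fin r) (h₁ : j₁ ∈ colSupport H i₀) (j₂ : Fin r)
        (h₂ : j₂ ∈ colSupport H i₀), f j₁ h₁ = f j₂ h₂ → j₁ = j₂ := by
      intro j₁ h₁ j₂ h₂ heq
      by_contra hne
      have hint : (colSupport H i₀ ∩ colSupport H (f j₁ h₁)).card ≤ 1 :=
        hgeo i₀ (f j₁ h₁) (Ne.symm (hfne j₁ h₁))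
      have hj1 : j₁ ∈ colSupport H i₀ ∩ colSupport H (f j₁ h₁) := by
        refine Finset.mem_inter.2 ⟨h₁, ?_⟩
        simp [colSupport, hfH j₁ h₁]
      have hj2 : j₂ ∈ colSupport H i₀ ∩ colSupport H (f j₁ h₁) := by
        refine Finset.mem_inter.2 ⟨h₂, ?_⟩
        simp [colSupport, heq ▸ hfH j₂ h₂]
      have := Finset.one_lt_card.2 ⟨j₁, hj1, j₂, hj2, hne⟩
      omega
    -- build an injection
    let g : {j // j ∈ colSupport H i₀} → Fin n := fun j => f j.1 j.2
    have hginj : Function.Injective g := by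
      intro a b hab
      exact Subtype.ext (this a.1 a.2 b.1 b.2 hab)
    calc (colSupport H i₀).card
        = Fintype.card {j // j ∈ colSupport H i₀} := (Fintype.card_coe _).symm
      _ ≤ (S.erase i₀).card := by
          have : ∀ a : {j // j ∈ colSupport H i₀}, g a ∈ S.erase i₀ :=
            fun a => hmaps a.1 a.2
          have := Fintype.card_le_of_injective
            (fun a => (⟨g a, this a⟩ : {y // y ∈ S.erase i₀}))
            (fun a b hab => hginj (Subtype.ext_iff.1 hab))
          rw [← Fintype.card_coe (S.erase i₀)]
          exact this
  rw [hcol i₀] at hcard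
  have : (S.erase i₀).card < S.card := Finset.card_erase_lt_of_mem hi₀S
  omega
end

section
/- (Tanner's eigenvalue bound on the minimum distance.) Let H be an r×n real matrix with all entries in {0,1}, such that every column sums to c and every row sums to d, and set Q = Hᵀ·H (so the all-ones vector 𝟙 ∈ ℝ^n satisfies Q·𝟙 = c·d·𝟙). Suppose λ₂ is a real number with λ₂ < c·d such that xᵀ·Q·x ≤ λ₂·xᵀ·x for every x ∈ ℝ^n orthogonal to 𝟙. Then every vector z ∈ ℝ^n with all entries in {0,1}, z ≠ 0, such that every coordinate of H·z is an even integer, has weight w = Σᵢ zᵢ satisfying w ≥ n·(2c − λ₂)/(c·d − λ₂). -/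
open Matrix

/-- Tanner's eigenvalue bound on the minimum distance: for a `(c, d)`-regular
0-1 parity-check matrix `H` whose matrix `Q = Hᵀ·H` has second eigenvalue bound
`λ₂ < c·d` on the orthogonal complement of the all-ones vector, every nonzero
0-1 vector `z` with `H·z` even in every coordinate has weight at least
`n·(2c − λ₂)/(c·d − λ₂)`. -/
theorem tanner_eigenvalue_min_distance_bound {r n : ℕ}
    (H : Matrix (Fin r) (Fin n) ℝ) (c d lam2 : ℝ)
    (h01 : ∀ j i, H j i = 0 ∨ H j i = 1)
    (hcol : ∀ i, ∑ j, H j i = c)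
    (hrow : ∀ j, ∑ i, H j i = d)
    (hlam : lam2 < c * d)
    (hquad : ∀ x : Fin n → ℝ, (∑ i, x i) = 0 →
      x ⬝ᵥ (Hᵀ * H).mulVec x ≤ lam2 * (x ⬝ᵥ x))
    (z : Fin n → ℝ) (hz01 : ∀ i, z i = 0 ∨ z i = 1) (hz : z ≠ 0)
    (heven : ∀ j, ∃ k : ℤ, H.mulVec z j = 2 * k) :
    (n : ℝ) * (2 * c - lam2) / (c * d - lam2) ≤ ∑ i, z i := by
  classical
  set w : ℝ := ∑ i, z i with hw
  obtain ⟨i0, hi0⟩ := Function.ne_iff.mp hz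
  have hn : 0 < n := i0.pos
  have hnR : (0 : ℝ) < n := by exact_mod_cast hn
  have hzsq : ∀ i, z i * z i = z i := fun i => by rcases hz01 i with h | h <;> simp [h]
  have hznn : ∀ i, 0 ≤ z i := fun i => by rcases hz01 i with h | h <;> simp [h]
  have hw_pos : 0 < w := by
    have hz1 : 0 < z i0 := by
      rcases hz01 i0 with h | h
      · exact absurd h hi0
      · simp [h]
    exact Finset.sum_pos' (fun i _ => hznn i) ⟨i0, Finset.mem_univ i0, hz1⟩
  set u : Fin r → ℝ := H.mulVec z with hu
  have husum : ∑ j, u j = c * w := by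
    simp only [hu, Matrix.mulVec, dotProduct]
    rw [Finset.sum_comm, hw, Finset.mul_sum]
    refine Finset.sum_congr rfl fun i _ => ?_
    rw [← Finset.sum_mul, hcol i]
  -- lower bound for the quadratic form
  have hlower : 2 * (c * w) ≤ ∑ j, u j * u j := by
    calc 2 * (c * w) = ∑ j, 2 * u j := by rw [← Finset.mul_sum, husum]
    _ ≤ ∑ j, u j * u j := by
        refine Finset.sum_le_sum fun j _ => ?_
        obtain ⟨k, hk⟩ := heven j
        have hkk : (k : ℝ) ≤ (k : ℝ) * k := by
          have : k ≤ k * k := by nlinarith [sq_nonneg k, sq_nonneg (k - 1)]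
          exact_mod_cast this
        have hk' : u j = 2 * (k : ℝ) := hk
        nlinarith [hkk]
  have hqz : z ⬝ᵥ (Hᵀ * H).mulVec z = ∑ j, u j * u j := by
    rw [← Matrix.mulVec_mulVec, Matrix.dotProduct_mulVec, Matrix.vecMul_transpose]
    rfl
  -- the centered vector
  set a : ℝ := w / n with ha
  set x : Fin n → ℝ := fun i => z i - a with hx
  have hxsum : ∑ i, x i = 0 := by
    simp only [hx, Finset.sum_sub_distrib, Finset.sum_const, Finset.card_univ,
      Fintype.card_fin, nsmul_eq_mul, ← hw, ha]
    field_simp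
    ring
  have hQrow : ∀ i, ∑ j, (Hᵀ * H) i j = c * d := by
    intro i
    simp only [Matrix.mul_apply, Matrix.transpose_apply]
    rw [Finset.sum_comm]
    calc ∑ k, ∑ j, H k i * H k j = ∑ k, H k i * d := by
          refine Finset.sum_congr rfl fun k _ => ?_
          rw [← Finset.mul_sum, hrow k]
    _ = c * d := by rw [← Finset.sum_mul, hcol i]
  have hQcol : ∀ j, ∑ i, (Hᵀ * H) i j = c * d := by
    intro j
    simp only [Matrix.mul_apply, Matrix.transpose_apply]
    rw [Finset.sum_comm]
    calc ∑ k, ∑ i, H k i * H k j = ∑ k, d * H k j := by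
          refine Finset.sum_congr rfl fun k _ => ?_
          rw [← Finset.sum_mul, hrow k, mul_comm]
    _ = c * d := by rw [← Finset.mul_sum, hcol j]; ring
  -- expand z = x + a·1 in the quadratic form
  have hdot : ∀ v : Fin n → ℝ, v ⬝ᵥ (Hᵀ * H).mulVec v
      = ∑ i, ∑ j, v i * ((Hᵀ * H) i j * v j) := by
    intro v
    simp only [dotProduct, Matrix.mulVec, Finset.mul_sum]
  have hsplit : z ⬝ᵥ (Hᵀ * H).mulVec z
      = x ⬝ᵥ (Hᵀ * H).mulVec x + a ^ 2 * (n * (c * d)) := by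
    rw [hdot z, hdot x]
    have hz_eq : ∀ i, z i = x i + a := fun i => by simp [hx]
    have expand : ∀ i j, z i * ((Hᵀ * H) i j * z j)
        = x i * ((Hᵀ * H) i j * x j) + a * ((Hᵀ * H) i j * x j)
          + (x i * (Hᵀ * H) i j) * a + a * (Hᵀ * H) i j * a := by
      intro i j
      rw [hz_eq i, hz_eq j]; ring
    simp only [expand, Finset.sum_add_distrib]
    have h1 : ∑ i, ∑ j, a * ((Hᵀ * H) i j * x j) = 0 := by
      rw [Finset.sum_comm]
      have : ∀ j, ∑ i, a * ((Hᵀ * H) i j * x j) = a * ((c * d) * x j) := by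
        intro j
        rw [← Finset.mul_sum]
        congr 1
        rw [← Finset.sum_mul, hQcol j]
      simp only [this]
      rw [← Finset.mul_sum]
      have : ∑ j, c * d * x j = 0 := by rw [← Finset.mul_sum, hxsum, mul_zero]
      rw [this, mul_zero]
    have h2 : ∑ i, ∑ j, x i * (Hᵀ * H) i j * a = 0 := by
      have : ∀ i, ∑ j, x i * (Hᵀ * H) i j * a = x i * (c * d) * a := by
        intro i
        rw [← Finset.sum_mul, ← Finset.mul_sum, hQrow i]
      simp only [this]
      have : ∑ i, x i * (c * d) * a = (∑ i, x i) * (c * d) * a := by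
        rw [Finset.sum_mul, Finset.sum_mul]
      rw [this, hxsum, zero_mul, zero_mul]
    have h3 : ∑ i : Fin n, ∑ j, a * (Hᵀ * H) i j * a = a ^ 2 * (n * (c * d)) := by
      have : ∀ i, ∑ j, a * (Hᵀ * H) i j * a = a * (c * d) * a := by
        intro i
        rw [← Finset.sum_mul, ← Finset.mul_sum, hQrow i]
      simp only [this, Finset.sum_const, Finset.card_univ, Fintype.card_fin, nsmul_eq_mul]
      ring
    rw [h1, h2, h3]
    ring
  have hxx : x ⬝ᵥ x = w - w ^ 2 / n := by
    simp only [dotProduct, hx]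
    have : ∀ i, (z i - a) * (z i - a) = z i - 2 * a * z i + a * a := by
      intro i
      have := hzsq i
      nlinarith [hzsq i]
    rw [Finset.sum_congr rfl fun i _ => this i]
    simp only [this, Finset.sum_add_distrib, Finset.sum_sub_distrib, Finset.sum_const,
      Finset.card_univ, Fintype.card_fin, nsmul_eq_mul, ← Finset.mul_sum, ← hw, ha]
    field_simp
    ring
  have hupper : z ⬝ᵥ (Hᵀ * H).mulVec z ≤ lam2 * (w - w ^ 2 / n) + a ^ 2 * (n * (c * d)) := by
    rw [hsplit]
    have := hquad x hxsum
    rw [hxx] at this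
    linarith
  have hmain : 2 * (c * w) ≤ lam2 * (w - w ^ 2 / n) + a ^ 2 * (n * (c * d)) := by
    calc 2 * (c * w) ≤ ∑ j, u j * u j := hlower
    _ = z ⬝ᵥ (Hᵀ * H).mulVec z := hqz.symm
    _ ≤ _ := hupper
  have hmain' : 2 * (c * w) * n ≤ lam2 * (w * n - w ^ 2) + w ^ 2 * (c * d) := by
    have ha2 : a ^ 2 * (n * (c * d)) = w ^ 2 * (c * d) / n := by
      rw [ha]; field_simp
    rw [ha2] at hmain
    have := mul_le_mul_of_nonneg_right hmain (le_of_lt hnR)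
    calc 2 * (c * w) * n = 2 * (c * w) * n := rfl
    _ ≤ (lam2 * (w - w ^ 2 / n) + w ^ 2 * (c * d) / n) * n := this
    _ = lam2 * (w * n - w ^ 2) + w ^ 2 * (c * d) := by field_simp
  rw [div_le_iff₀ (by linarith : (0 : ℝ) < c * d - lam2)]
  nlinarith [hmain', hw_pos, hnR, mul_pos hw_pos hnR]
end

section
/- (Tanner's eigenvalue bound on expansion.) Let H be an r×n real matrix with all entries in {0,1}, such that every column sums to c and every row sums to d, and set Q = Hᵀ·H (so the all-ones vector 𝟙 ∈ ℝ^n satisfies Q·𝟙 = c·d·𝟙). Suppose λ₂ is a real number with λ₂ < c·d such that xᵀ·Q·x ≤ λ₂·xᵀ·x for every x ∈ ℝ^n orthogonal to 𝟙. Then for every nonempty set T of column indices with |T| = t, the number u of row indices j such that H_{ji} = 1 for some i ∈ T satisfies u ≥ c²·t / ((c·d − λ₂)·t/n + λ₂). -/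
open Matrix

open Classical in
/-- Tanner's eigenvalue bound on expansion: for a `(c, d)`-regular 0-1 matrix
`H` whose matrix `Q = Hᵀ·H` has second eigenvalue bound `λ₂ < c·d` on the
orthogonal complement of the all-ones vector, any nonempty set `T` of `t`
columns has at least `c²·t / ((c·d − λ₂)·t/n + λ₂)` neighboring rows. -/
theorem tanner_eigenvalue_expansion_bound {r n : ℕ}
    (H : Matrix (Fin r) (Fin n) ℝ) (c d lam2 : ℝ)
    (h01 : ∀ j i, H j i = 0 ∨ H j i = 1)
    (hcol : ∀ i, ∑ j, H j i = c)
    (hrow : ∀ j, ∑ i, H j i = d)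
    (hlam : lam2 < c * d)
    (hquad : ∀ x : Fin n → ℝ, (∑ i, x i) = 0 →
      x ⬝ᵥ (Hᵀ * H).mulVec x ≤ lam2 * (x ⬝ᵥ x))
    (T : Finset (Fin n)) (hT : T.Nonempty) :
    c ^ 2 * T.card / ((c * d - lam2) * T.card / n + lam2) ≤
      ((Finset.univ.filter (fun j => ∃ i ∈ T, H j i = 1)).card : ℝ) := by
  obtain ⟨i0, hi0⟩ := hT
  have hn : 0 < n := i0.pos
  have hnR : (0:ℝ) < n := by exact_mod_cast hn
  set t : ℝ := (T.card : ℝ) with ht_def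
  have ht0 : 0 < t := by
    rw [ht_def]
    exact_mod_cast Finset.card_pos.mpr ⟨i0, hi0⟩
  set N := Finset.univ.filter (fun j => ∃ i ∈ T, H j i = 1) with hN
  set u : ℝ := (N.card : ℝ) with hu_def
  have hu0 : (0:ℝ) ≤ u := Nat.cast_nonneg _
  set y : Fin r → ℝ := fun j => ∑ i ∈ T, H j i with hy
  have hsumy : ∑ j, y j = c * t := by
    simp only [hy]
    rw [Finset.sum_comm (f := fun j i => H j i)]
    simp [hcol, mul_comm, ht_def]
  have hyN : ∀ j, j ∉ N → y j = 0 := by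
    intro j hj
    simp only [hN, Finset.mem_filter, Finset.mem_univ, true_and] at hj
    push_neg at hj
    refine Finset.sum_eq_zero fun i hiT => ?_
    rcases h01 j i with h | h
    · exact h
    · exact absurd h (hj i hiT)
  set S : ℝ := ∑ j, (y j)^2 with hS_def
  -- row/col counting identity
  have hrd : (r:ℝ) * d = n * c := by
    have h1 : ∑ j : Fin r, ∑ i : Fin n, H j i = (r:ℝ) * d := by
      simp [hrow, Finset.sum_const, mul_comm]
    have h2 : ∑ j : Fin r, ∑ i : Fin n, H j i = (n:ℝ) * c := by
      rw [Finset.sum_comm (f := fun j i => H j i)]; simp [hcol, Finset.sum_const, mul_comm]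
    linarith
  -- the quadratic bound on S
  have hS : S ≤ lam2 * (t - t^2/n) + c*d*t^2/n := by
    set x : Fin n → ℝ := fun i => (if i ∈ T then (1:ℝ) else 0) - t/n with hx
    have hxsum : (∑ i, x i) = 0 := by
      simp only [hx, Finset.sum_sub_distrib, Finset.sum_ite_mem, Finset.univ_inter,
        Finset.sum_const, Finset.sum_const, nsmul_eq_mul, Finset.card_univ,
        Fintype.card_fin, Finset.sum_boole]
      field_simp
      simp [ht_def]
    have key := hquad x hxsum
    have hmv : ∀ j, H.mulVec x j = y j - t*d/n := by
      intro j
      have h1 : ∑ i, H j i * (t/n) = d * (t/n) := by rw [← Finset.sum_mul, hrow]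
      simp only [mulVec, dotProduct, hx, mul_sub, Finset.sum_sub_distrib, mul_ite,
        mul_one, mul_zero, Finset.sum_ite_mem, Finset.univ_inter, h1]
      simp only [hy]
      ring
    have hform : x ⬝ᵥ (Hᵀ * H).mulVec x = ∑ j, (H.mulVec x j)^2 := by
      rw [← mulVec_mulVec, dotProduct_mulVec, vecMul_transpose]
      simp [dotProduct, sq]
    have hlhs : x ⬝ᵥ (Hᵀ * H).mulVec x
        = S - 2*(t*d/n)*(c*t) + r*(t*d/n)^2 := by
      rw [hform]
      have : ∀ j, (H.mulVec x j)^2 = (y j)^2 - 2*(t*d/n)*(y j) + (t*d/n)^2 := by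
        intro j; rw [hmv j]; ring
      rw [Finset.sum_congr rfl fun j _ => this j]
      rw [Finset.sum_add_distrib, Finset.sum_sub_distrib, ← Finset.mul_sum, hsumy,
        Finset.sum_const, Finset.card_univ, Fintype.card_fin, nsmul_eq_mul]
      all_goals ring
    have hxx : x ⬝ᵥ x = t - t^2/n := by
      simp only [dotProduct, hx]
      have : ∀ i : Fin n, ((if i ∈ T then (1:ℝ) else 0) - t/n) * ((if i ∈ T then (1:ℝ) else 0) - t/n)
          = (if i ∈ T then (1:ℝ) else 0) - 2*(t/n)*(if i ∈ T then (1:ℝ) else 0) + (t/n)^2 := by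
        intro i; by_cases h : i ∈ T <;> simp [h] <;> ring
      rw [Finset.sum_congr rfl fun i _ => this i]
      rw [Finset.sum_add_distrib, Finset.sum_sub_distrib, ← Finset.mul_sum]
      simp only [Finset.sum_ite_mem, Finset.univ_inter, Finset.sum_const, nsmul_eq_mul,
        Finset.card_univ, Fintype.card_fin]
      field_simp
      all_goals ring
    rw [hlhs, hxx] at key
    have h3 : (r:ℝ)*(t*d/n)^2 = c*d*t^2/n := by
      field_simp
      linear_combination d * hrd
    have h4 : 2*(t*d/n)*(c*t) = 2*(c*d*t^2/n) := by ring
    linarith [key, h3, h4]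
  -- Cauchy-Schwarz
  have hCS : (c*t)^2 ≤ u * S := by
    have h1 : ∑ j ∈ N, y j = c * t := by
      rw [← hsumy]
      exact Finset.sum_subset (Finset.subset_univ N) (fun j _ hj => hyN j hj)
    have h2 : (∑ j ∈ N, y j)^2 ≤ N.card * ∑ j ∈ N, (y j)^2 :=
      sq_sum_le_card_mul_sum_sq
    have h3 : ∑ j ∈ N, (y j)^2 ≤ S := by
      refine Finset.sum_le_sum_of_subset_of_nonneg (Finset.subset_univ N)
        fun j _ _ => sq_nonneg _
    calc (c*t)^2 = (∑ j ∈ N, y j)^2 := by rw [h1]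
      _ ≤ N.card * ∑ j ∈ N, (y j)^2 := h2
      _ ≤ u * S := by
          exact mul_le_mul_of_nonneg_left h3 hu0
  set D : ℝ := (c * d - lam2) * t / n + lam2 with hD
  show c ^ 2 * t / D ≤ u
  rcases le_or_gt D 0 with hDle | hDpos
  · calc c ^ 2 * t / D ≤ 0 := div_nonpos_of_nonneg_of_nonpos (by positivity) hDle
      _ ≤ u := hu0
  · rw [div_le_iff₀ hDpos]
    have htD : S ≤ t * D := by
      rw [hD]
      have : t * ((c * d - lam2) * t / n + lam2) = lam2 * (t - t^2/n) + c*d*t^2/n := by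
        field_simp; ring
      rw [this]; exact hS
    have : (c*t)^2 ≤ u * (t * D) := le_trans hCS (mul_le_mul_of_nonneg_left htD hu0)
    nlinarith [this, ht0]
end

section
/- Let (P, L) be a finite projective plane of order q. Then for every set of t ≥ 1 distinct lines, the number of points lying on at least one of these lines is at least (q + 1)²·t / (t + q). -/
open Configuration

/-- In a finite projective plane of order `q`, any `t ≥ 1` distinct lines cover
at least `(q+1)²·t / (t + q)` points. -/
theorem projective_plane_expansion (P L : Type*) [Membership P L]
    [ProjectivePlane P L] [Fintype P] [Fintype L]
    (T : Finset L) (hT : T.Nonempty) :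
    ((ProjectivePlane.order P L : ℝ) + 1) ^ 2 * T.card /
        (T.card + (ProjectivePlane.order P L : ℝ)) ≤
      (Nat.card {p : P // ∃ ℓ ∈ T, p ∈ ℓ} : ℝ) := by
  classical
  set q : ℕ := ProjectivePlane.order P L with hq
  set t : ℕ := T.card with ht
  set S : Finset P := Finset.univ.filter (fun p => ∃ ℓ ∈ T, p ∈ ℓ) with hS
  set d : P → ℕ := fun p => (T.filter (fun ℓ => p ∈ ℓ)).card with hd
  have hline : ∀ ℓ : L, (Finset.univ.filter (fun p : P => p ∈ ℓ)).card = q + 1 := by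
    intro ℓ
    have := ProjectivePlane.pointCount_eq P ℓ
    rwa [pointCount, Nat.card_eq_fintype_card, Fintype.card_subtype] at this
  -- d as a sum of indicators
  have hd_eq : ∀ p : P, d p = ∑ ℓ ∈ T, if p ∈ ℓ then 1 else 0 := by
    intro p; rw [hd]; exact Finset.card_filter _ _
  -- ∑ over S equals ∑ over univ
  have hzero : ∀ p ∈ Finset.univ, p ∉ S → d p = 0 := by
    intro p _ hp
    simp only [hS, Finset.mem_filter, Finset.mem_univ, true_and, not_exists] at hp
    simp only [hd, Finset.card_eq_zero, Finset.filter_eq_empty_iff]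
    intro ℓ hℓ
    exact fun h => hp ℓ ⟨hℓ, h⟩
  -- first moment
  have hsum1 : ∑ p ∈ S, d p = t * (q + 1) := by
    rw [Finset.sum_subset (Finset.subset_univ S) hzero]
    calc ∑ p : P, d p = ∑ p : P, ∑ ℓ ∈ T, if p ∈ ℓ then 1 else 0 := by
          simp_rw [hd_eq]
      _ = ∑ ℓ ∈ T, ∑ p : P, if p ∈ ℓ then 1 else 0 := Finset.sum_comm
      _ = ∑ ℓ ∈ T, (q + 1) := by
          refine Finset.sum_congr rfl fun ℓ _ => ?_
          rw [← hline ℓ, Finset.card_filter]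
      _ = t * (q + 1) := by rw [Finset.sum_const, ht, smul_eq_mul]
  -- intersection of two distinct lines has exactly one point
  have hmeet : ∀ ℓ₁ ℓ₂ : L, ℓ₁ ≠ ℓ₂ →
      (Finset.univ.filter (fun p : P => p ∈ ℓ₁ ∧ p ∈ ℓ₂)).card = 1 := by
    intro ℓ₁ ℓ₂ h
    obtain ⟨p, hp, hpu⟩ := HasPoints.existsUnique_point P L ℓ₁ ℓ₂ h
    rw [Finset.card_eq_one]
    exact ⟨p, Finset.eq_singleton_iff_unique_mem.mpr
      ⟨by simpa using hp, fun x hx => hpu x (by simpa using hx)⟩⟩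
  -- second moment
  have hsum2 : ∑ p ∈ S, d p ^ 2 = t * (t + q) := by
    rw [Finset.sum_subset (Finset.subset_univ S) (fun p h1 h2 => by
      rw [hzero p h1 h2]; ring)]
    calc ∑ p : P, d p ^ 2
        = ∑ p : P, ∑ ℓ₁ ∈ T, ∑ ℓ₂ ∈ T, if p ∈ ℓ₁ ∧ p ∈ ℓ₂ then 1 else 0 := by
          refine Finset.sum_congr rfl fun p _ => ?_
          rw [sq, hd_eq, Finset.sum_mul_sum]
          refine Finset.sum_congr rfl fun ℓ₁ _ => Finset.sum_congr rfl fun ℓ₂ _ => ?_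
          by_cases h1 : p ∈ ℓ₁ <;> by_cases h2 : p ∈ ℓ₂ <;> simp [h1, h2]
      _ = ∑ ℓ₁ ∈ T, ∑ ℓ₂ ∈ T, ∑ p : P, if p ∈ ℓ₁ ∧ p ∈ ℓ₂ then 1 else 0 := by
          rw [Finset.sum_comm]
          exact Finset.sum_congr rfl fun ℓ₁ _ => Finset.sum_comm
      _ = ∑ ℓ₁ ∈ T, ∑ ℓ₂ ∈ T, (if ℓ₂ = ℓ₁ then q + 1 else 1) := by
          refine Finset.sum_congr rfl fun ℓ₁ _ => Finset.sum_congr rfl fun ℓ₂ _ => ?_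
          by_cases h : ℓ₂ = ℓ₁
          · subst h
            rw [if_pos rfl]
            simp_rw [and_self]
            rw [← Finset.card_filter]
            exact hline ℓ₂
          · rw [if_neg h, ← Finset.card_filter]
            exact hmeet ℓ₁ ℓ₂ (Ne.symm h)
      _ = t * (t + q) := by
          have : ∀ ℓ₁ ∈ T, ∑ ℓ₂ ∈ T, (if ℓ₂ = ℓ₁ then q + 1 else 1) = t + q := by
            intro ℓ₁ hℓ₁
            have hf : ∀ ℓ₂, (if ℓ₂ = ℓ₁ then q + 1 else 1)
                = 1 + (if ℓ₂ = ℓ₁ then q else 0) := by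
              intro ℓ₂; split <;> omega
            simp_rw [hf]
            rw [Finset.sum_add_distrib, Finset.sum_const, ht, smul_eq_mul, mul_one,
              Finset.sum_ite_eq' T ℓ₁ (fun _ => q), if_pos hℓ₁]
          rw [Finset.sum_congr rfl this, Finset.sum_const, ht, smul_eq_mul]
  -- identify Nat.card with S.card
  have hcard : Nat.card {p : P // ∃ ℓ ∈ T, p ∈ ℓ} = S.card := by
    rw [Nat.card_eq_fintype_card, hS, Fintype.card_subtype]
  -- Cauchy–Schwarz over ℝ
  have hCS : ((∑ p ∈ S, (d p : ℝ)) ^ 2) ≤ S.card * ∑ p ∈ S, (d p : ℝ) ^ 2 :=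
    sq_sum_le_card_mul_sum_sq
  have h1 : (∑ p ∈ S, (d p : ℝ)) = (t : ℝ) * (q + 1) := by
    rw [← Nat.cast_sum, hsum1]; push_cast; ring
  have h2 : (∑ p ∈ S, (d p : ℝ) ^ 2) = (t : ℝ) * (t + q) := by
    have : ∑ p ∈ S, (d p : ℝ) ^ 2 = ((∑ p ∈ S, d p ^ 2 : ℕ) : ℝ) := by
      push_cast; ring
    rw [this, hsum2]; push_cast; ring
  rw [h1, h2] at hCS
  have ht1 : (1 : ℝ) ≤ (t : ℝ) := by
    exact_mod_cast Nat.one_le_iff_ne_zero.mpr (Finset.card_ne_zero_of_mem hT.choose_spec)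
  have hq0 : (0 : ℝ) ≤ (q : ℝ) := Nat.cast_nonneg q
  have hn0 : (0 : ℝ) ≤ (S.card : ℝ) := Nat.cast_nonneg _
  have hden : (0 : ℝ) < (t : ℝ) + q := by linarith
  rw [hcard, hq, ht] at *
  rw [div_le_iff₀ hden]
  nlinarith [hCS, sq_nonneg ((q:ℝ)+1)]
end

section
/- Let B_1, …, B_n be finite sets, each of size exactly c, and let S = B_1 △ B_2 be the symmetric difference of the first two. Suppose that for every index j ∉ {1, 2} one has c > |B_1 ∩ B_2| + |B_1 ∩ B_j| + |B_2 ∩ B_j| − 2·|B_1 ∩ B_2 ∩ B_j|. Then |B_1 ∩ S| = |B_2 ∩ S| = c − |B_1 ∩ B_2|, and |B_k ∩ S| > |B_j ∩ S| for each k ∈ {1, 2} and each j ∉ {1, 2}. (Thus the bit-flipping algorithm, which flips a variable whose block has the largest intersection with the syndrome, chooses one of the two erroneous positions.) -/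
open Finset

lemma inter_symmDiff_left {α : Type*} [DecidableEq α] (A C : Finset α) :
    A ∩ symmDiff A C = A \ C := by
  ext x
  simp [Finset.mem_symmDiff]
  tauto

lemma card_inter_symmDiff_left {α : Type*} [DecidableEq α] (A C : Finset α) :
    (A ∩ symmDiff A C).card = A.card - (A ∩ C).card := by
  rw [inter_symmDiff_left]
  rw [show A \ C = A \ (A ∩ C) by ext x; simp]
  exact Finset.card_sdiff_of_subset inter_subset_left

lemma card_inter_symmDiff_other {α : Type*} [DecidableEq α] (D A C : Finset α) :
    (D ∩ symmDiff A C).card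
      = (D ∩ A).card - (D ∩ A ∩ C).card + ((D ∩ C).card - (D ∩ A ∩ C).card) := by
  have h : D ∩ symmDiff A C = (D ∩ A) \ (D ∩ A ∩ C) ∪ (D ∩ C) \ (D ∩ A ∩ C) := by
    ext x
    simp [Finset.mem_symmDiff]
    tauto
  have hdisj : Disjoint ((D ∩ A) \ (D ∩ A ∩ C)) ((D ∩ C) \ (D ∩ A ∩ C)) := by
    rw [Finset.disjoint_left]
    intro a ha hb
    simp at ha hb
    tauto
  rw [h, Finset.card_union_of_disjoint hdisj,
    Finset.card_sdiff_of_subset inter_subset_left,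
    Finset.card_sdiff_of_subset (by intro x hx; simp at hx ⊢; tauto)]


/-- Two errors: for blocks `B 0, B 1, …` of common size `c` with syndrome
`S = B 0 △ B 1`, if `c > |B 0 ∩ B 1| + |B 0 ∩ B j| + |B 1 ∩ B j| − 2·|B 0 ∩ B 1 ∩ B j|`
for every other index `j`, then `|B 0 ∩ S| = |B 1 ∩ S| = c − |B 0 ∩ B 1|` and
the two erroneous blocks have strictly larger intersection with `S` than any
other block, so the bit-flipping algorithm flips an erroneous position. -/
theorem two_errors_bit_flip_succeeds {α : Type*} [DecidableEq α] {n c : ℕ}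
    (B : Fin (n + 2) → Finset α) (hB : ∀ i, (B i).card = c)
    (hj : ∀ j : Fin (n + 2), j ≠ 0 → j ≠ 1 →
      ((B 0 ∩ B 1).card + (B 0 ∩ B j).card + (B 1 ∩ B j).card
        - 2 * (B 0 ∩ B 1 ∩ B j).card : ℤ) < c) :
    (B 0 ∩ symmDiff (B 0) (B 1)).card = c - (B 0 ∩ B 1).card ∧
    (B 1 ∩ symmDiff (B 0) (B 1)).card = c - (B 0 ∩ B 1).card ∧
    (∀ j : Fin (n + 2), j ≠ 0 → j ≠ 1 →
      (B j ∩ symmDiff (B 0) (B 1)).card < (B 0 ∩ symmDiff (B 0) (B 1)).card ∧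
      (B j ∩ symmDiff (B 0) (B 1)).card < (B 1 ∩ symmDiff (B 0) (B 1)).card) := by
  have key : ∀ j : Fin (n + 2), j ≠ 0 → j ≠ 1 →
      (B j ∩ symmDiff (B 0) (B 1)).card < c - (B 0 ∩ B 1).card := by
    intro j h0 h1
    have := hj j h0 h1
    have e := card_inter_symmDiff_other (B j) (B 0) (B 1)
    have c1 : (B j ∩ (B 0) ∩ (B 1)).card ≤ (B j ∩ B 0).card :=
      Finset.card_le_card inter_subset_left
    have c2 : (B j ∩ (B 0) ∩ (B 1)).card ≤ (B j ∩ B 1).card :=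
      Finset.card_le_card (by intro x hx; simp at hx ⊢; tauto)
    have cle : (B 0 ∩ B 1).card ≤ c := by
      rw [← hB 0]; exact Finset.card_le_card inter_subset_left
    have e1 : (B j ∩ B 0).card = (B 0 ∩ B j).card := by rw [Finset.inter_comm]
    have e2 : (B j ∩ B 1).card = (B 1 ∩ B j).card := by rw [Finset.inter_comm]
    have e3 : (B j ∩ B 0 ∩ B 1).card = (B 0 ∩ B 1 ∩ B j).card := by
      congr 1; ext x; simp; tauto
    omega
  have h0 : (B 0 ∩ symmDiff (B 0) (B 1)).card = c - (B 0 ∩ B 1).card := by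
    rw [card_inter_symmDiff_left, hB 0]
  have h1 : (B 1 ∩ symmDiff (B 0) (B 1)).card = c - (B 0 ∩ B 1).card := by
    have : symmDiff (B 0) (B 1) = symmDiff (B 1) (B 0) := symmDiff_comm _ _
    rw [this, card_inter_symmDiff_left, hB 1, Finset.inter_comm]
  refine ⟨h0, h1, fun j hj0 hj1 => ?_⟩
  rw [h0, h1]
  exact ⟨key j hj0 hj1, key j hj0 hj1⟩
end

section
/- Let B_1, B_2, B_3 be finite sets, each of size exactly 5, forming a triangle: |B_i ∩ B_j| = 1 for all i ≠ j and B_1 ∩ B_2 ∩ B_3 = ∅, and let S = B_1 △ B_2 △ B_3. Let B_4 be a further set of size 5 with |B_4 ∩ B_i| = 1 for each i ∈ {1, 2, 3} and B_4 ∩ B_i ∩ B_j = ∅ for all distinct i, j ∈ {1, 2, 3}. Then |B_4 ∩ S| = 3, which equals |B_i ∩ S| for i ∈ {1, 2, 3}, and the updated syndrome S △ B_4 has exactly 8 elements. (Hence for block size c = 5 the bit-flipping algorithm may flip the non-erroneous position 4 and then fails, since a syndrome of size 8 cannot equal a symmetric difference B_i △ B_j of two of the original blocks.) -/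
private lemma card_symmDiff_int {α : Type*} [DecidableEq α] (s t : Finset α) :
    ((symmDiff s t).card : ℤ) = s.card + t.card - 2 * (s ∩ t).card := by
  have h1 := Finset.card_sdiff_add_card_inter s t
  have h2 := Finset.card_sdiff_add_card_inter t s
  have hd : Disjoint (s \ t) (t \ s) := disjoint_sdiff_sdiff
  have hs : symmDiff s t = (s \ t) ∪ (t \ s) := by
    ext x; simp [Finset.mem_symmDiff]
  have h3 : (symmDiff s t).card = (s \ t).card + (t \ s).card := by
    rw [hs, Finset.card_union_of_disjoint hd]
  rw [Finset.inter_comm] at h2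
  push_cast [h3]
  omega

private lemma card_inter_symmDiff_int {α : Type*} [DecidableEq α] (A X Y : Finset α) :
    ((A ∩ symmDiff X Y).card : ℤ)
      = (A ∩ X).card + (A ∩ Y).card - 2 * (A ∩ X ∩ Y).card := by
  have h : A ∩ symmDiff X Y = symmDiff (A ∩ X) (A ∩ Y) := inf_symmDiff_distrib_left A X Y
  have h2 : (A ∩ X) ∩ (A ∩ Y) = A ∩ X ∩ Y := by
    ext x; simp [Finset.mem_inter]; tauto
  rw [h, card_symmDiff_int, h2]

/-- Three errors and block size `c = 5`: for a triangle `B₁, B₂, B₃` with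
syndrome `S = B₁ △ B₂ △ B₃` and a fourth block `B₄` meeting each `Bᵢ` in one
point with no triple intersections, the block `B₄` meets `S` in 3 points —
as many as each erroneous block — and flipping position 4 yields the updated
syndrome `S △ B₄` of exactly 8 elements, so the bit-flipping algorithm may
flip the non-erroneous position 4 and then fails. -/
theorem three_errors_bit_flip_may_fail {α : Type*} [DecidableEq α]
    (B₁ B₂ B₃ B₄ : Finset α)
    (h1 : B₁.card = 5) (h2 : B₂.card = 5) (h3 : B₃.card = 5) (h4 : B₄.card = 5)
    (h12 : (B₁ ∩ B₂).card = 1) (h13 : (B₁ ∩ B₃).card = 1)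
    (h23 : (B₂ ∩ B₃).card = 1) (h123 : B₁ ∩ B₂ ∩ B₃ = ∅)
    (h41 : (B₄ ∩ B₁).card = 1) (h42 : (B₄ ∩ B₂).card = 1)
    (h43 : (B₄ ∩ B₃).card = 1)
    (h412 : B₄ ∩ B₁ ∩ B₂ = ∅) (h413 : B₄ ∩ B₁ ∩ B₃ = ∅)
    (h423 : B₄ ∩ B₂ ∩ B₃ = ∅) :
    (B₄ ∩ symmDiff (symmDiff B₁ B₂) B₃).card = 3 ∧
    (B₁ ∩ symmDiff (symmDiff B₁ B₂) B₃).card = 3 ∧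
    (B₂ ∩ symmDiff (symmDiff B₁ B₂) B₃).card = 3 ∧
    (B₃ ∩ symmDiff (symmDiff B₁ B₂) B₃).card = 3 ∧
    (symmDiff (symmDiff (symmDiff B₁ B₂) B₃) B₄).card = 8 := by
  set T := symmDiff B₁ B₂ with hT
  -- B₄ part
  have e1 : B₄ ∩ T ∩ B₃ = symmDiff (B₄ ∩ B₁ ∩ B₃) (B₄ ∩ B₂ ∩ B₃) := by
    rw [hT]; ext x
    simp only [Finset.mem_inter, Finset.mem_symmDiff]; tauto
  have c1 : (B₄ ∩ T ∩ B₃).card = 0 := by rw [e1, h413, h423]; simp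
  have c2 : ((B₄ ∩ T).card : ℤ) = 2 := by
    have z : (B₄ ∩ B₁ ∩ B₂).card = 0 := by rw [h412]; simp
    rw [hT, card_inter_symmDiff_int, h41, h42, z]; norm_num
  have c4 : ((B₄ ∩ symmDiff T B₃).card : ℤ) = 3 := by
    rw [card_inter_symmDiff_int, c2, h43, c1]; norm_num
  -- B₁ part
  have e11 : B₁ ∩ T ∩ B₃ = symmDiff (B₁ ∩ B₃) (B₁ ∩ B₂ ∩ B₃) := by
    rw [hT]; ext x
    simp only [Finset.mem_inter, Finset.mem_symmDiff]; tauto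
  have c11 : ((B₁ ∩ T ∩ B₃).card : ℤ) = 1 := by
    have ha : (B₁ ∩ B₂ ∩ B₃).card = 0 := by rw [h123]; simp
    have hb : (B₁ ∩ B₃ ∩ (B₁ ∩ B₂ ∩ B₃)).card = 0 := by
      rw [h123, Finset.inter_empty]; simp
    rw [e11, card_symmDiff_int, h13, ha, hb]; norm_num
  have c12 : ((B₁ ∩ T).card : ℤ) = 4 := by
    rw [hT, card_inter_symmDiff_int, Finset.inter_self, h1, h12]; norm_num
  have cB1 : ((B₁ ∩ symmDiff T B₃).card : ℤ) = 3 := by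
    rw [card_inter_symmDiff_int, c12, h13, c11]; norm_num
  -- B₂ part
  have e21 : B₂ ∩ T ∩ B₃ = symmDiff (B₁ ∩ B₂ ∩ B₃) (B₂ ∩ B₃) := by
    rw [hT]; ext x
    simp only [Finset.mem_inter, Finset.mem_symmDiff]; tauto
  have c21 : ((B₂ ∩ T ∩ B₃).card : ℤ) = 1 := by
    have ha : (B₁ ∩ B₂ ∩ B₃).card = 0 := by rw [h123]; simp
    have hb : (B₁ ∩ B₂ ∩ B₃ ∩ (B₂ ∩ B₃)).card = 0 := by
      rw [h123, Finset.empty_inter]; simp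
    rw [e21, card_symmDiff_int, h23, ha, hb]; norm_num
  have c22 : ((B₂ ∩ T).card : ℤ) = 4 := by
    rw [hT, card_inter_symmDiff_int, Finset.inter_self,
      Finset.inter_comm B₂ B₁, Finset.inter_assoc, Finset.inter_self, h12, h2]
    norm_num
  have cB2 : ((B₂ ∩ symmDiff T B₃).card : ℤ) = 3 := by
    rw [card_inter_symmDiff_int, c22, h23, c21]; norm_num
  -- B₃ part
  have e31 : B₃ ∩ T ∩ B₃ = B₃ ∩ T := by
    ext x; simp only [Finset.mem_inter]; tauto
  have c32 : ((B₃ ∩ T).card : ℤ) = 2 := by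
    have h132 : (B₁ ∩ B₃ ∩ B₂).card = 0 := by
      have : B₁ ∩ B₃ ∩ B₂ = ∅ := by
        rw [Finset.eq_empty_iff_forall_notMem] at h123 ⊢
        intro x hx
        exact h123 x (by simp only [Finset.mem_inter] at hx ⊢; tauto)
      rw [this]; simp
    rw [hT, card_inter_symmDiff_int, Finset.inter_comm B₃ B₁,
      Finset.inter_comm B₃ B₂, h13, h23, h132]
    norm_num
  have cB3 : ((B₃ ∩ symmDiff T B₃).card : ℤ) = 3 := by
    rw [card_inter_symmDiff_int, c32, Finset.inter_self, h3, e31, c32]; norm_num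
  -- syndromes
  have cT : ((T).card : ℤ) = 8 := by
    rw [hT, card_symmDiff_int, h1, h2, h12]; norm_num
  have cTB3 : ((T ∩ B₃).card : ℤ) = 2 := by rw [Finset.inter_comm]; exact c32
  have cS : ((symmDiff T B₃).card : ℤ) = 9 := by
    rw [card_symmDiff_int, cT, h3, cTB3]; norm_num
  have cSB4 : ((symmDiff T B₃ ∩ B₄).card : ℤ) = 3 := by
    rw [Finset.inter_comm]; exact c4
  have cFinal : ((symmDiff (symmDiff T B₃) B₄).card : ℤ) = 8 := by
    rw [card_symmDiff_int, cS, h4, cSB4]; norm_num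
  exact ⟨by exact_mod_cast c4, by exact_mod_cast cB1, by exact_mod_cast cB2,
    by exact_mod_cast cB3, by exact_mod_cast cFinal⟩
end
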